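/- Let $p : \mathbb{R}^d \to [0,\infty)$ be a measurable probability density, let $\rho > 0$ with $I := \int_{\mathbb{R}^d} p^{1/\rho} \in (0,\infty)$, and define $q := p^{1/\rho}/I$ and the tempered density $\hat q := q^\rho / \int q^\rho$. Then for every measurable function $g : \mathbb{R}^d \to \mathbb{R}^m$ with $\int \|g(x)\| p(x)\, dx < \infty$, we have $\int_{\mathbb{R}^d} g(x)\, \hat q(x)\, dx - \int_{\mathbb{R}^d} g(x)\, p(x)\, dx = 0$; in particular, the maximum-likelihood update direction $\mathbb{E}_{\hat q}[g] - \mathbb{E}_p[g]$ vanishes. -/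
import Mathlib


open MeasureTheory Real

/-- If `q ∝ p^{1/ρ}` and `q̂ = q^ρ / ∫ q^ρ` is its `ρ`-tempered density, then for every
measurable `g` with `∫ ‖g‖ p < ∞`, the maximum-likelihood update direction
`E_{q̂}[g] - E_p[g]` vanishes. -/
theorem mle_update_vanishes_at_tempered_fixed_point
    {d m : ℕ} (p : (Fin d → ℝ) → ℝ) (hp : Measurable p) (hnn : ∀ x, 0 ≤ p x)
    (hpint : Integrable p) (hprob : ∫ x, p x = 1)
    (ρ : ℝ) (hρ : 0 < ρ)
    (hIint : Integrable (fun x => p x ^ (1 / ρ)))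
    (hI : 0 < ∫ x, p x ^ (1 / ρ))
    (q : (Fin d → ℝ) → ℝ) (hq : q = fun x => p x ^ (1 / ρ) / ∫ y, p y ^ (1 / ρ))
    (qhat : (Fin d → ℝ) → ℝ) (hqhat : qhat = fun x => q x ^ ρ / ∫ y, q y ^ ρ)
    (g : (Fin d → ℝ) → (Fin m → ℝ)) (hg : Measurable g)
    (hgint : Integrable (fun x => ‖g x‖ * p x)) :
    (∫ x, qhat x • g x) - (∫ x, p x • g x) = 0 := by
  set I : ℝ := ∫ y, p y ^ (1 / ρ) with hIdef
  have hIρ : (0:ℝ) < I ^ ρ := Real.rpow_pos_of_pos hI ρ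
  have hqρ : ∀ x, q x ^ ρ = p x / I ^ ρ := by
    intro x
    rw [hq]
    rw [Real.div_rpow (Real.rpow_nonneg (hnn x) _) hI.le,
      ← Real.rpow_mul (hnn x), one_div, inv_mul_cancel₀ hρ.ne', Real.rpow_one]
  have hint : (∫ y, q y ^ ρ) = 1 / I ^ ρ := by
    simp only [hqρ, div_eq_mul_inv, one_mul]
    rw [integral_mul_const, hprob, one_mul]
  have hqhat' : qhat = p := by
    funext x
    rw [hqhat]
    show q x ^ ρ / ∫ y, q y ^ ρ = p x
    rw [hint, hqρ x]
    field_simp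
  rw [hqhat', sub_self]
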